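/- Let D be a Young diagram, p, q coprime positive integers, K a positive integer, P = Kp, Q = Kq, such that every box (x,y) of D satisfies qx + py \leq Kpq - p - q. Fix non-negative integers a, l with l/(a+1) \geq q/p (i.e., p·l \geq q·(a+1)). If (a, Q-1-l) \in D, then the number of boxes c \in D with a(c) = a and l(c) = l equals the number of boxes in R_{P,Q} \ D with arm a and leg l, where R_{P,Q} = {0,...,P-1} \times {0,...,Q-1}. -/

import Mathlib

/-- A Young diagram: a finite down-closed subset of ℕ². -/
def IsYoung (D : Finset (ℕ × ℕ)) : Prop :=
  ∀ x y x' y', (x, y) ∈ D → x' ≤ x → y' ≤ y → (x', y') ∈ D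

/-- Arm length of a box inside the diagram. -/
def arm (D : Finset (ℕ × ℕ)) (c : ℕ × ℕ) : ℕ :=
  (D.filter fun d => d.2 = c.2 ∧ c.1 < d.1).card

/-- Leg length of a box inside the diagram. -/
def leg (D : Finset (ℕ × ℕ)) (c : ℕ × ℕ) : ℕ :=
  (D.filter fun d => d.1 = c.1 ∧ c.2 < d.2).card

/-- Arm length of a box in the complement of the diagram. -/
def coArm (D : Finset (ℕ × ℕ)) (c : ℕ × ℕ) : ℕ :=
  ((Finset.range c.1).filter fun x' => (x', c.2) ∉ D).card

/-- Leg length of a box in the complement of the diagram. -/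
def coLeg (D : Finset (ℕ × ℕ)) (c : ℕ × ℕ) : ℕ :=
  ((Finset.range c.2).filter fun y' => (c.1, y') ∉ D).card

namespace YoungAux

lemma mem_iff_lt_card (s : Finset ℕ) (hs : ∀ x ∈ s, ∀ x', x' ≤ x → x' ∈ s) (x : ℕ) :
    x ∈ s ↔ x < s.card := by
  constructor
  · intro hx
    have hsub : Finset.range (x + 1) ⊆ s := fun z hz =>
      hs x hx z (Nat.lt_succ_iff.mp (Finset.mem_range.mp hz))
    have := Finset.card_le_card hsub
    simpa using this
  · intro hx
    by_contra hxs
    have hsub : s ⊆ Finset.range x := by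
      intro z hz
      rw [Finset.mem_range]
      by_contra hzx
      exact hxs (hs z hz x (le_of_not_gt hzx))
    have := Finset.card_le_card hsub
    simp at this; omega

def rl (D : Finset (ℕ × ℕ)) (y : ℕ) : ℕ := (D.filter fun d => d.2 = y).card
def cl (D : Finset (ℕ × ℕ)) (x : ℕ) : ℕ := (D.filter fun d => d.1 = x).card

lemma mem_iff_rl (D : Finset (ℕ × ℕ)) (hD : IsYoung D) (x y : ℕ) :
    (x, y) ∈ D ↔ x < rl D y := by
  set s : Finset ℕ := (D.filter fun d => d.2 = y).image Prod.fst with hs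
  have hcard : s.card = rl D y := by
    rw [hs, Finset.card_image_of_injOn]
    · rfl
    · intro d hd d' hd' h
      simp only [Finset.mem_coe, Finset.mem_filter] at hd hd'
      exact Prod.ext h (hd.2.trans hd'.2.symm)
  have hmem : ∀ z, z ∈ s ↔ (z, y) ∈ D := by
    intro z
    simp only [hs, Finset.mem_image, Finset.mem_filter]
    constructor
    · rintro ⟨d, ⟨hd, hdy⟩, hdx⟩
      rwa [← hdx, ← hdy]
    · intro h; exact ⟨(z, y), ⟨h, rfl⟩, rfl⟩
  rw [← hmem, ← hcard]
  exact mem_iff_lt_card s (fun z hz z' hz' =>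
    (hmem z').mpr (hD z y z' y ((hmem z).mp hz) hz' le_rfl)) x

lemma mem_iff_cl (D : Finset (ℕ × ℕ)) (hD : IsYoung D) (x y : ℕ) :
    (x, y) ∈ D ↔ y < cl D x := by
  set s : Finset ℕ := (D.filter fun d => d.1 = x).image Prod.snd with hs
  have hcard : s.card = cl D x := by
    rw [hs, Finset.card_image_of_injOn]
    · rfl
    · intro d hd d' hd' h
      simp only [Finset.mem_coe, Finset.mem_filter] at hd hd'
      exact Prod.ext (hd.2.trans hd'.2.symm) h
  have hmem : ∀ z, z ∈ s ↔ (x, z) ∈ D := by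
    intro z
    simp only [hs, Finset.mem_image, Finset.mem_filter]
    constructor
    · rintro ⟨d, ⟨hd, hdy⟩, hdx⟩
      rwa [← hdx, ← hdy]
    · intro h; exact ⟨(x, z), ⟨h, rfl⟩, rfl⟩
  rw [← hmem, ← hcard]
  exact mem_iff_lt_card s (fun z hz z' hz' =>
    (hmem z').mpr (hD x z x z' ((hmem z).mp hz) le_rfl hz')) y

lemma rl_anti (D : Finset (ℕ × ℕ)) (hD : IsYoung D) {y y' : ℕ} (h : y ≤ y') :
    rl D y' ≤ rl D y := by
  by_contra hc
  push_neg at hc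
  have : (rl D y, y') ∈ D := (mem_iff_rl D hD _ _).mpr hc
  have : (rl D y, y) ∈ D := hD _ _ _ _ this le_rfl h
  have := (mem_iff_rl D hD _ _).mp this
  omega

lemma cl_anti (D : Finset (ℕ × ℕ)) (hD : IsYoung D) {x x' : ℕ} (h : x ≤ x') :
    cl D x' ≤ cl D x := by
  by_contra hc
  push_neg at hc
  have : (x', cl D x) ∈ D := (mem_iff_cl D hD _ _).mpr hc
  have : (x, cl D x) ∈ D := hD _ _ _ _ this h le_rfl
  have := (mem_iff_cl D hD _ _).mp this
  omega

lemma arm_eq (D : Finset (ℕ × ℕ)) (hD : IsYoung D) {x y : ℕ} (h : (x, y) ∈ D) :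
    arm D (x, y) + x + 1 = rl D y := by
  have hx : x < rl D y := (mem_iff_rl D hD x y).mp h
  have : (D.filter fun d => d.2 = (x, y).2 ∧ (x, y).1 < d.1)
      = (Finset.Ioo x (rl D y)).image fun t => (t, y) := by
    ext d
    simp only [Finset.mem_filter, Finset.mem_image, Finset.mem_Ioo]
    constructor
    · rintro ⟨hd, hdy, hdx⟩
      have hd' : (d.1, y) ∈ D := by rw [← hdy]; simpa using hd
      exact ⟨d.1, ⟨hdx, (mem_iff_rl D hD d.1 y).mp hd'⟩, Prod.ext rfl hdy.symm⟩
    · rintro ⟨t, ⟨ht1, ht2⟩, rfl⟩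
      exact ⟨(mem_iff_rl D hD t y).mpr ht2, rfl, ht1⟩
  rw [arm, this, Finset.card_image_of_injective _ (fun t t' h => by
    simpa using congrArg Prod.fst h), Nat.card_Ioo]
  omega

lemma leg_eq (D : Finset (ℕ × ℕ)) (hD : IsYoung D) {x y : ℕ} (h : (x, y) ∈ D) :
    leg D (x, y) + y + 1 = cl D x := by
  have hx : y < cl D x := (mem_iff_cl D hD x y).mp h
  have : (D.filter fun d => d.1 = (x, y).1 ∧ (x, y).2 < d.2)
      = (Finset.Ioo y (cl D x)).image fun t => (x, t) := by
    ext d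
    simp only [Finset.mem_filter, Finset.mem_image, Finset.mem_Ioo]
    constructor
    · rintro ⟨hd, hdy, hdx⟩
      have hd' : (x, d.2) ∈ D := by rw [← hdy]; simpa using hd
      exact ⟨d.2, ⟨hdx, (mem_iff_cl D hD x d.2).mp hd'⟩, Prod.ext hdy.symm rfl⟩
    · rintro ⟨t, ⟨ht1, ht2⟩, rfl⟩
      exact ⟨(mem_iff_cl D hD x t).mpr ht2, rfl, ht1⟩
  rw [leg, this, Finset.card_image_of_injective _ (fun t t' h => by
    simpa using congrArg Prod.snd h), Nat.card_Ioo]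
  omega

lemma coArm_eq (D : Finset (ℕ × ℕ)) (hD : IsYoung D) {x y : ℕ} (h : (x, y) ∉ D) :
    coArm D (x, y) + rl D y = x := by
  have hx : rl D y ≤ x := by
    by_contra hc
    exact h ((mem_iff_rl D hD x y).mpr (by omega))
  have : ((Finset.range x).filter fun x' => (x', y) ∉ D) = Finset.Ico (rl D y) x := by
    ext z
    simp only [Finset.mem_filter, Finset.mem_range, Finset.mem_Ico, mem_iff_rl D hD]
    omega
  rw [coArm, this, Nat.card_Ico]
  omega

lemma coLeg_eq (D : Finset (ℕ × ℕ)) (hD : IsYoung D) {x y : ℕ} (h : (x, y) ∉ D) :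
    coLeg D (x, y) + cl D x = y := by
  have hx : cl D x ≤ y := by
    by_contra hc
    exact h ((mem_iff_cl D hD x y).mpr (by omega))
  have : ((Finset.range y).filter fun y' => (x, y') ∉ D) = Finset.Ico (cl D x) y := by
    ext z
    simp only [Finset.mem_filter, Finset.mem_range, Finset.mem_Ico, mem_iff_cl D hD]
    omega
  rw [coLeg, this, Nat.card_Ico]
  omega

lemma crossing (f : ℕ → ℕ) (b : ℕ) :
    ∀ T, (if b < f T then 1 else 0)
        + ((Finset.range T).filter fun i => b < f i ∧ f (i + 1) ≤ b).card
      = (if b < f 0 then 1 else 0)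
        + ((Finset.range T).filter fun i => f i ≤ b ∧ b < f (i + 1)).card := by
  intro T
  induction T with
  | zero => simp
  | succ T ih =>
    rw [Finset.range_add_one, Finset.filter_insert, Finset.filter_insert]
    by_cases h1 : b < f T <;> by_cases h2 : b < f (T + 1)
    · rw [if_pos h1] at ih
      rw [if_pos h2, if_neg (by omega : ¬(b < f T ∧ f (T + 1) ≤ b)),
        if_neg (by omega : ¬(f T ≤ b ∧ b < f (T + 1)))]
      omega
    · rw [if_pos h1] at ih
      rw [if_neg h2, if_pos (⟨h1, by omega⟩ : b < f T ∧ f (T + 1) ≤ b),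
        if_neg (by omega : ¬(f T ≤ b ∧ b < f (T + 1))),
        Finset.card_insert_of_notMem (by simp)]
      omega
    · rw [if_neg h1] at ih
      rw [if_pos h2, if_neg (by omega : ¬(b < f T ∧ f (T + 1) ≤ b)),
        if_pos (⟨by omega, h2⟩ : f T ≤ b ∧ b < f (T + 1)),
        Finset.card_insert_of_notMem (by simp)]
      omega
    · rw [if_neg h1] at ih
      rw [if_neg h2, if_neg (by omega : ¬(b < f T ∧ f (T + 1) ≤ b)),
        if_neg (by omega : ¬(f T ≤ b ∧ b < f (T + 1)))]
      omega

end YoungAux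

namespace YoungAux

variable {D : Finset (ℕ × ℕ)} {P Q : ℕ}

/-- index of the E-step of column `x` along the boundary path. -/
def iot (D : Finset (ℕ × ℕ)) (Q x : ℕ) : ℕ := x + (Q - cl D x)

/-- index of the S-step of row `y` along the boundary path. -/
def sig (D : Finset (ℕ × ℕ)) (Q y : ℕ) : ℕ := (Q - 1 - y) + rl D y

/-- number of E-steps among the first `i` steps. -/
def NN (D : Finset (ℕ × ℕ)) (P Q i : ℕ) : ℕ :=
  ((Finset.range P).filter fun x => iot D Q x < i).card

lemma cl_le_Q (hD : IsYoung D) (hdim : ∀ c ∈ D, c.1 < P ∧ c.2 < Q) (x : ℕ) :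
    cl D x ≤ Q := by
  by_contra hc
  push_neg at hc
  have : (x, Q) ∈ D := (mem_iff_cl D hD x Q).mpr hc
  exact absurd (hdim _ this).2 (lt_irrefl Q)

lemma rl_le_P (hD : IsYoung D) (hdim : ∀ c ∈ D, c.1 < P ∧ c.2 < Q) (y : ℕ) :
    rl D y ≤ P := by
  by_contra hc
  push_neg at hc
  have : (P, y) ∈ D := (mem_iff_rl D hD P y).mpr hc
  exact absurd (hdim _ this).1 (lt_irrefl P)

lemma iot_mono (hD : IsYoung D) : StrictMono (iot D Q) := by
  apply strictMono_nat_of_lt_succ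
  intro x
  have h1 : cl D (x + 1) ≤ cl D x := cl_anti D hD (Nat.le_succ x)
  unfold iot
  omega

lemma sig_anti (hD : IsYoung D) {y y' : ℕ} (h : y' < y) (hy : y < Q) :
    sig D Q y < sig D Q y' := by
  have h1 : rl D y ≤ rl D y' := rl_anti D hD (le_of_lt h)
  unfold sig
  omega

lemma cross_mem (hD : IsYoung D) (hdim : ∀ c ∈ D, c.1 < P ∧ c.2 < Q)
    {x y : ℕ} (hy : y < Q) (hm : (x, y) ∈ D) : iot D Q x < sig D Q y := by
  have h1 : x < rl D y := (mem_iff_rl D hD x y).mp hm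
  have h2 : y < cl D x := (mem_iff_cl D hD x y).mp hm
  have h3 : cl D x ≤ Q := cl_le_Q hD hdim x
  unfold iot sig
  omega

lemma cross_not_mem (hD : IsYoung D) {x y : ℕ} (hy : y < Q) (hm : (x, y) ∉ D) :
    sig D Q y < iot D Q x := by
  have h1 : rl D y ≤ x := by
    by_contra hc; exact hm ((mem_iff_rl D hD x y).mpr (by omega))
  have h2 : cl D x ≤ y := by
    by_contra hc; exact hm ((mem_iff_cl D hD x y).mpr (by omega))
  unfold iot sig
  omega

lemma iot_lt (x : ℕ) (hx : x < P) : iot D Q x < P + Q := by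
  unfold iot; omega

lemma sig_lt (hD : IsYoung D) (hdim : ∀ c ∈ D, c.1 < P ∧ c.2 < Q)
    {y : ℕ} (hy : y < Q) : sig D Q y < P + Q := by
  have := rl_le_P hD hdim y
  unfold sig
  omega

lemma NN_mono {i j : ℕ} (h : i ≤ j) : NN D P Q i ≤ NN D P Q j := by
  apply Finset.card_le_card
  intro x hx
  simp only [Finset.mem_filter] at hx ⊢
  exact ⟨hx.1, lt_of_lt_of_le hx.2 h⟩

lemma NN_step (hD : IsYoung D) (i : ℕ) : NN D P Q (i + 1) ≤ NN D P Q i + 1 := by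
  have hsub : ((Finset.range P).filter fun x => iot D Q x < i + 1)
      ⊆ ((Finset.range P).filter fun x => iot D Q x < i)
        ∪ ((Finset.range P).filter fun x => iot D Q x = i) := by
    intro x hx
    simp only [Finset.mem_filter, Finset.mem_union, Finset.mem_range] at hx ⊢
    omega
  have h1 : ((Finset.range P).filter fun x => iot D Q x = i).card ≤ 1 := by
    apply Finset.card_le_one.mpr
    intro x hx x' hx'
    simp only [Finset.mem_filter] at hx hx'
    exact (iot_mono hD).injective (hx.2.trans hx'.2.symm)
  calc NN D P Q (i + 1) ≤ _ := Finset.card_le_card hsub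
  _ ≤ NN D P Q i + ((Finset.range P).filter fun x => iot D Q x = i).card :=
      Finset.card_union_le _ _
  _ ≤ NN D P Q i + 1 := by omega

lemma NN_iot (hD : IsYoung D) {x : ℕ} (hx : x ≤ P) : NN D P Q (iot D Q x) = x := by
  have : ((Finset.range P).filter fun z => iot D Q z < iot D Q x) = Finset.range x := by
    ext z
    simp only [Finset.mem_filter, Finset.mem_range, (iot_mono (Q := Q) hD).lt_iff_lt]
    omega
  rw [NN, this, Finset.card_range]

lemma NN_iot1 (hD : IsYoung D) {x : ℕ} (hx : x < P) :
    NN D P Q (iot D Q x + 1) = x + 1 := by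
  have : ((Finset.range P).filter fun z => iot D Q z < iot D Q x + 1)
      = Finset.range (x + 1) := by
    ext z
    have h1 : iot D Q z < iot D Q x ↔ z < x := (iot_mono (Q := Q) hD).lt_iff_lt
    have h2 : iot D Q z = iot D Q x ↔ z = x := (iot_mono (Q := Q) hD).injective.eq_iff
    simp only [Finset.mem_filter, Finset.mem_range]
    omega
  rw [NN, this, Finset.card_range]

lemma NN_sig (hD : IsYoung D) (hdim : ∀ c ∈ D, c.1 < P ∧ c.2 < Q)
    {y : ℕ} (hy : y < Q) : NN D P Q (sig D Q y) = rl D y := by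
  have : ((Finset.range P).filter fun z => iot D Q z < sig D Q y)
      = Finset.range (rl D y) := by
    ext z
    simp only [Finset.mem_filter, Finset.mem_range]
    constructor
    · rintro ⟨hzP, hz⟩
      by_contra hc
      have hnm : (z, y) ∉ D := fun hm => hc ((mem_iff_rl D hD z y).mp hm)
      have := cross_not_mem (Q := Q) hD hy hnm
      omega
    · intro hz
      have hzP : z < P := lt_of_lt_of_le hz (rl_le_P hD hdim y)
      exact ⟨hzP, cross_mem hD hdim hy ((mem_iff_rl D hD z y).mpr hz)⟩
  rw [NN, this, Finset.card_range]

lemma NN_sig1 (hD : IsYoung D) (hdim : ∀ c ∈ D, c.1 < P ∧ c.2 < Q)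
    {y : ℕ} (hy : y < Q) : NN D P Q (sig D Q y + 1) = rl D y := by
  have : ((Finset.range P).filter fun z => iot D Q z < sig D Q y + 1)
      = Finset.range (rl D y) := by
    ext z
    simp only [Finset.mem_filter, Finset.mem_range]
    constructor
    · rintro ⟨hzP, hz⟩
      by_contra hc
      have hnm : (z, y) ∉ D := fun hm => hc ((mem_iff_rl D hD z y).mp hm)
      have := cross_not_mem (Q := Q) hD hy hnm
      omega
    · intro hz
      have hzP : z < P := lt_of_lt_of_le hz (rl_le_P hD hdim y)
      have := cross_mem hD hdim hy ((mem_iff_rl D hD z y).mpr hz)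
      exact ⟨hzP, by omega⟩
  rw [NN, this, Finset.card_range]

lemma NN_top : NN D P Q (P + Q) = P := by
  have : ((Finset.range P).filter fun z => iot D Q z < P + Q) = Finset.range P := by
    ext z
    simp only [Finset.mem_filter, Finset.mem_range]
    constructor
    · exact fun h => h.1
    · intro h
      refine ⟨h, ?_⟩
      unfold iot
      omega
  rw [NN, this, Finset.card_range]

lemma NN_succ_none (hne : ∀ x, x < P → iot D Q x ≠ i) :
    NN D P Q (i + 1) = NN D P Q i := by
  have : ((Finset.range P).filter fun x => iot D Q x < i + 1)
      = ((Finset.range P).filter fun x => iot D Q x < i) := by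
    ext z
    simp only [Finset.mem_filter, Finset.mem_range]
    have := fun h => hne z h
    constructor
    · rintro ⟨h1, h2⟩
      have := hne z h1
      exact ⟨h1, by omega⟩
    · rintro ⟨h1, h2⟩
      exact ⟨h1, by omega⟩
  rw [NN, NN, this]

lemma iot_sig_surj (hD : IsYoung D) (hdim : ∀ c ∈ D, c.1 < P ∧ c.2 < Q)
    {i : ℕ} (hi : i < P + Q) :
    (∃ x, x < P ∧ iot D Q x = i) ∨ (∃ y, y < Q ∧ sig D Q y = i) := by
  classical
  set A := (Finset.range P).image (iot D Q) with hA
  set B := (Finset.range Q).image (sig D Q) with hB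
  have hdisj : Disjoint A B := by
    rw [Finset.disjoint_left]
    intro j hjA hjB
    simp only [hA, hB, Finset.mem_image, Finset.mem_range] at hjA hjB
    obtain ⟨x, hx, rfl⟩ := hjA
    obtain ⟨y, hy, hxy⟩ := hjB
    by_cases hm : (x, y) ∈ D
    · have := cross_mem hD hdim hy hm; omega
    · have := cross_not_mem (Q := Q) hD hy hm; omega
  have hcardA : A.card = P := by
    rw [hA, Finset.card_image_of_injective _ (iot_mono (Q := Q) hD).injective,
      Finset.card_range]
  have hcardB : B.card = Q := by
    rw [hB, Finset.card_image_of_injOn, Finset.card_range]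
    intro y hy y' hy' hyy
    simp only [Finset.mem_coe, Finset.mem_range] at hy hy'
    by_contra hne
    rcases Nat.lt_or_ge y y' with h | h
    · have := sig_anti (Q := Q) hD h hy'; omega
    · have h' : y' < y := by omega
      have := sig_anti (Q := Q) hD h' hy; omega
  have hsub : A ∪ B ⊆ Finset.range (P + Q) := by
    intro j hj
    rw [Finset.mem_union] at hj
    rcases hj with hj | hj
    · simp only [hA, Finset.mem_image, Finset.mem_range] at hj
      obtain ⟨x, hx, rfl⟩ := hj
      exact Finset.mem_range.mpr (iot_lt x hx)
    · simp only [hB, Finset.mem_image, Finset.mem_range] at hj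
      obtain ⟨y, hy, rfl⟩ := hj
      exact Finset.mem_range.mpr (sig_lt hD hdim hy)
  have heq : A ∪ B = Finset.range (P + Q) := by
    apply Finset.eq_of_subset_of_card_le hsub
    rw [Finset.card_range, Finset.card_union_of_disjoint hdisj, hcardA, hcardB]
  have : i ∈ A ∪ B := heq ▸ Finset.mem_range.mpr hi
  rw [Finset.mem_union] at this
  rcases this with h | h
  · left
    simp only [hA, Finset.mem_image, Finset.mem_range] at h
    obtain ⟨x, hx, hxi⟩ := h
    exact ⟨x, hx, hxi⟩
  · right
    simp only [hB, Finset.mem_image, Finset.mem_range] at h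
    obtain ⟨y, hy, hyi⟩ := h
    exact ⟨y, hy, hyi⟩

end YoungAux

open YoungAux in
theorem inside_rectangle_case_inside (D : Finset (ℕ × ℕ)) (hD : IsYoung D)
    (p q K : ℕ) (hp : 0 < p) (hq : 0 < q) (hK : 0 < K) (hpq : Nat.Coprime p q)
    (hdiag : ∀ c ∈ D, q * c.1 + p * c.2 + p + q ≤ K * p * q)
    (a l : ℕ) (ha : a < K * p) (hl : l < K * q)
    (hslope : q * (a + 1) ≤ p * l)
    (hbox : (a, K * q - 1 - l) ∈ D) :
    (D.filter fun c => arm D c = a ∧ leg D c = l).card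
      = (((Finset.range (K * p)) ×ˢ (Finset.range (K * q))).filter
          fun c => c ∉ D ∧ coArm D c = a ∧ coLeg D c = l).card := by
  classical
  set P := K * p with hPdef
  set Q := K * q with hQdef
  have hdim : ∀ c ∈ D, c.1 < P ∧ c.2 < Q := by
    intro c hc
    have h := hdiag c hc
    have hPQ : P * q = p * Q := by rw [hPdef, hQdef]; ring
    constructor
    · have h1 : q * (c.1 + 1) ≤ q * P := by
        have e : q * (c.1 + 1) = q * c.1 + q := by ring
        have e2 : q * P = P * q := Nat.mul_comm _ _
        omega
      exact Nat.lt_of_succ_le (Nat.le_of_mul_le_mul_left h1 hq)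
    · have h1 : p * (c.2 + 1) ≤ p * Q := by
        have e : p * (c.2 + 1) = p * c.2 + p := by ring
        omega
      exact Nat.lt_of_succ_le (Nat.le_of_mul_le_mul_left h1 hp)
  set m := a + l + 1 with hmdef
  set T := P + Q - m with hTdef
  have hmPQ : m ≤ P + Q - 1 := by omega
  set f : ℕ → ℕ := fun i => NN D P Q (i + m) - NN D P Q i with hf
  -- translate the LHS count into down-crossings of f
  have hL : (D.filter fun c => arm D c = a ∧ leg D c = l).card
      = ((Finset.range T).filter fun i => a < f i ∧ f (i + 1) ≤ a).card := by
    apply Finset.card_bij (fun c _ => iot D Q c.1)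
    · rintro ⟨x, y⟩ hc
      simp only [Finset.mem_filter] at hc
      obtain ⟨hmem, harm, hleg⟩ := hc
      have hxP : x < P := (hdim _ hmem).1
      have hyQ : y < Q := (hdim _ hmem).2
      have hArm := arm_eq D hD hmem
      have hLeg := leg_eq D hD hmem
      rw [harm] at hArm
      rw [hleg] at hLeg
      have hclQ : cl D x ≤ Q := cl_le_Q hD hdim x
      have hsig : sig D Q y = iot D Q x + m := by
        unfold sig iot
        omega
      have e1 : NN D P Q (iot D Q x) = x := NN_iot hD (le_of_lt hxP)
      have e2 : NN D P Q (iot D Q x + 1) = x + 1 := NN_iot1 hD hxP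
      have e3 : NN D P Q (iot D Q x + m) = x + a + 1 := by
        rw [← hsig, NN_sig hD hdim hyQ]; omega
      have e4 : NN D P Q (iot D Q x + 1 + m) = x + a + 1 := by
        have h' : iot D Q x + 1 + m = sig D Q y + 1 := by omega
        rw [h', NN_sig1 hD hdim hyQ]; omega
      have hsb : sig D Q y < P + Q := sig_lt hD hdim hyQ
      simp only [Finset.mem_filter, Finset.mem_range, hf]
      refine ⟨by omega, ?_, ?_⟩
      · rw [e3, e1]; omega
      · rw [e4, e2]; omega
    · rintro ⟨x, y⟩ hc ⟨x', y'⟩ hc' hxy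
      simp only [Finset.mem_filter] at hc hc'
      obtain ⟨hmem, harm, hleg⟩ := hc
      obtain ⟨hmem', harm', hleg'⟩ := hc'
      simp only at hxy
      have hx : x = x' := (iot_mono (Q := Q) hD).injective hxy
      have hLeg := leg_eq D hD hmem
      have hLeg' := leg_eq D hD hmem'
      rw [hleg] at hLeg
      rw [hleg'] at hLeg'
      rw [hx] at hLeg
      have : y = y' := by omega
      exact Prod.ext hx this
    · intro i hi
      simp only [Finset.mem_filter, Finset.mem_range, hf] at hi
      obtain ⟨hiT, h1, h2⟩ := hi
      rw [show i + 1 + m = i + m + 1 from by omega] at h2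
      have s1 : NN D P Q i ≤ NN D P Q (i + 1) := NN_mono (by omega)
      have s2 : NN D P Q (i + 1) ≤ NN D P Q i + 1 := NN_step hD i
      have s3 : NN D P Q (i + m) ≤ NN D P Q (i + m + 1) := NN_mono (by omega)
      have s4 : NN D P Q (i + m + 1) ≤ NN D P Q (i + m) + 1 := NN_step hD (i + m)
      have s5 : NN D P Q (i + 1) ≤ NN D P Q (i + m) := NN_mono (by omega)
      have e2 : NN D P Q (i + 1) = NN D P Q i + 1 := by omega
      have e3 : NN D P Q (i + m) = NN D P Q i + a + 1 := by omega
      have e4 : NN D P Q (i + m + 1) = NN D P Q (i + m) := by omega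
      -- there is an E-step at i
      have hex : ∃ x, x < P ∧ iot D Q x = i := by
        by_contra hc
        push_neg at hc
        have := NN_succ_none (D := D) (P := P) (i := i) (fun x hx => hc x hx)
        omega
      obtain ⟨x, hxP, hxi⟩ := hex
      -- there is an S-step at i + m
      have hnex : ∀ x', x' < P → iot D Q x' ≠ i + m := by
        intro x' hx' hcon
        have hv1 : NN D P Q (i + m) = x' := by rw [← hcon, NN_iot hD (le_of_lt hx')]
        have hv2 : NN D P Q (i + m + 1) = x' + 1 := by
          rw [show i + m + 1 = iot D Q x' + 1 from by omega, NN_iot1 hD hx']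
        omega
      have him : i + m < P + Q := by omega
      have hey : ∃ y, y < Q ∧ sig D Q y = i + m := by
        rcases iot_sig_surj hD hdim him with h | h
        · obtain ⟨x', hx', hxi'⟩ := h
          exact absurd hxi' (hnex x' hx')
        · exact h
      obtain ⟨y, hyQ, hyi⟩ := hey
      have hmem : (x, y) ∈ D := by
        by_contra hnm
        have := cross_not_mem (Q := Q) hD hyQ hnm
        omega
      have hNx : NN D P Q i = x := by rw [← hxi, NN_iot hD (le_of_lt hxP)]
      have hNrl : rl D y = x + a + 1 := by
        have := NN_sig hD hdim hyQ
        rw [hyi] at this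
        omega
      have hArm := arm_eq D hD hmem
      have harm : arm D (x, y) = a := by omega
      have hyc : y < cl D x := (mem_iff_cl D hD x y).mp hmem
      have hclQ : cl D x ≤ Q := cl_le_Q hD hdim x
      have hcl : cl D x = y + l + 1 := by
        have hsig : sig D Q y = iot D Q x + m := by omega
        unfold sig iot at hsig
        omega
      have hLeg := leg_eq D hD hmem
      have hlegv : leg D (x, y) = l := by omega
      exact ⟨(x, y), Finset.mem_filter.mpr ⟨hmem, harm, hlegv⟩, hxi⟩
  -- translate the RHS count into up-crossings of f
  have hR : (((Finset.range P) ×ˢ (Finset.range Q)).filter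
          fun c => c ∉ D ∧ coArm D c = a ∧ coLeg D c = l).card
      = ((Finset.range T).filter fun i => f i ≤ a ∧ a < f (i + 1)).card := by
    apply Finset.card_bij (fun c _ => sig D Q c.2)
    · rintro ⟨x, y⟩ hc
      simp only [Finset.mem_filter, Finset.mem_product, Finset.mem_range] at hc
      obtain ⟨⟨hxP, hyQ⟩, hnm, hcoarm, hcoleg⟩ := hc
      have hCo := coArm_eq D hD hnm
      have hCo2 := coLeg_eq D hD hnm
      rw [hcoarm] at hCo
      rw [hcoleg] at hCo2
      have hclQ : cl D x ≤ Q := cl_le_Q hD hdim x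
      have hiot : iot D Q x = sig D Q y + m := by
        unfold sig iot
        omega
      have e1 : NN D P Q (sig D Q y) = rl D y := NN_sig hD hdim hyQ
      have e2 : NN D P Q (sig D Q y + 1) = rl D y := NN_sig1 hD hdim hyQ
      have e3 : NN D P Q (sig D Q y + m) = rl D y + a := by
        rw [← hiot, NN_iot hD (le_of_lt hxP)]; omega
      have e4 : NN D P Q (sig D Q y + 1 + m) = rl D y + a + 1 := by
        have h' : sig D Q y + 1 + m = iot D Q x + 1 := by omega
        rw [h', NN_iot1 hD hxP]; omega
      have hib : iot D Q x < P + Q := iot_lt x hxP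
      simp only [Finset.mem_filter, Finset.mem_range, hf]
      refine ⟨by omega, ?_, ?_⟩
      · rw [e3, e1]; omega
      · rw [e4, e2]; omega
    · rintro ⟨x, y⟩ hc ⟨x', y'⟩ hc' hxy
      simp only [Finset.mem_filter, Finset.mem_product, Finset.mem_range] at hc hc'
      obtain ⟨⟨hxP, hyQ⟩, hnm, hcoarm, hcoleg⟩ := hc
      obtain ⟨⟨hxP', hyQ'⟩, hnm', hcoarm', hcoleg'⟩ := hc'
      simp only at hxy
      have hy : y = y' := by
        by_contra hne
        rcases Nat.lt_or_ge y y' with h | h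
        · have := sig_anti (Q := Q) hD h hyQ'; omega
        · have h' : y' < y := by omega
          have := sig_anti (Q := Q) hD h' hyQ; omega
      have hCo := coArm_eq D hD hnm
      have hCo' := coArm_eq D hD hnm'
      rw [hcoarm] at hCo
      rw [hcoarm'] at hCo'
      rw [hy] at hCo
      have : x = x' := by omega
      exact Prod.ext this hy
    · intro i hi
      simp only [Finset.mem_filter, Finset.mem_range, hf] at hi
      obtain ⟨hiT, h1, h2⟩ := hi
      rw [show i + 1 + m = i + m + 1 from by omega] at h2
      have s1 : NN D P Q i ≤ NN D P Q (i + 1) := NN_mono (by omega)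
      have s2 : NN D P Q (i + 1) ≤ NN D P Q i + 1 := NN_step hD i
      have s3 : NN D P Q (i + m) ≤ NN D P Q (i + m + 1) := NN_mono (by omega)
      have s4 : NN D P Q (i + m + 1) ≤ NN D P Q (i + m) + 1 := NN_step hD (i + m)
      have s5 : NN D P Q (i + 1) ≤ NN D P Q (i + m) := NN_mono (by omega)
      have e2 : NN D P Q (i + 1) = NN D P Q i := by omega
      have e3 : NN D P Q (i + m) = NN D P Q i + a := by omega
      have e4 : NN D P Q (i + m + 1) = NN D P Q (i + m) + 1 := by omega
      -- there is an E-step at i + m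
      have hex : ∃ x, x < P ∧ iot D Q x = i + m := by
        by_contra hc
        push_neg at hc
        have := NN_succ_none (D := D) (P := P) (i := i + m) (fun x hx => hc x hx)
        omega
      obtain ⟨x, hxP, hxi⟩ := hex
      -- there is an S-step at i
      have hnex : ∀ x', x' < P → iot D Q x' ≠ i := by
        intro x' hx' hcon
        have hv1 : NN D P Q i = x' := by rw [← hcon, NN_iot hD (le_of_lt hx')]
        have hv2 : NN D P Q (i + 1) = x' + 1 := by
          rw [show i + 1 = iot D Q x' + 1 from by omega, NN_iot1 hD hx']
        omega
      have hilt : i < P + Q := by omega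
      have hey : ∃ y, y < Q ∧ sig D Q y = i := by
        rcases iot_sig_surj hD hdim hilt with h | h
        · obtain ⟨x', hx', hxi'⟩ := h
          exact absurd hxi' (hnex x' hx')
        · exact h
      obtain ⟨y, hyQ, hyi⟩ := hey
      have hnm : (x, y) ∉ D := by
        intro hm
        have := cross_mem hD hdim hyQ hm
        omega
      have hNx : NN D P Q (i + m) = x := by rw [← hxi, NN_iot hD (le_of_lt hxP)]
      have hNrl : rl D y = NN D P Q i := by
        have := NN_sig hD hdim hyQ
        rw [hyi] at this
        omega
      have hCo := coArm_eq D hD hnm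
      have hcoarm : coArm D (x, y) = a := by omega
      have hcly : cl D x ≤ y := by
        by_contra hcon
        exact hnm ((mem_iff_cl D hD x y).mpr (by omega))
      have hclQ : cl D x ≤ Q := cl_le_Q hD hdim x
      have hxrl : x = rl D y + a := by omega
      have hcl : y = cl D x + l := by
        have hiot : iot D Q x = sig D Q y + m := by omega
        unfold sig iot at hiot
        omega
      have hCo2 := coLeg_eq D hD hnm
      have hcolegv : coLeg D (x, y) = l := by omega
      exact ⟨(x, y), Finset.mem_filter.mpr
        ⟨Finset.mem_product.mpr ⟨Finset.mem_range.mpr hxP, Finset.mem_range.mpr hyQ⟩,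
          hnm, hcoarm, hcolegv⟩, hyi⟩
  rw [hL, hR]
  -- endpoint values of f
  have hN0 : NN D P Q 0 = 0 := by
    rw [NN]
    convert Finset.card_empty
    ext z
    simp
  have h0 : a < f 0 := by
    have hclaQ : Q - 1 - l < cl D a := (mem_iff_cl D hD a (Q - 1 - l)).mp hbox
    have hclQ : cl D a ≤ Q := cl_le_Q hD hdim a
    have hile : iot D Q a + 1 ≤ m := by
      unfold iot
      omega
    have := NN_iot1 (Q := Q) (P := P) hD ha
    have hmono : NN D P Q (iot D Q a + 1) ≤ NN D P Q m := NN_mono hile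
    simp only [hf, Nat.zero_add, hN0]
    omega
  have hT : a < f T := by
    have hx0 : P - a - 1 < P := by omega
    have hcl0 : cl D (P - a - 1) ≤ l := by
      by_contra hc
      push_neg at hc
      have hmem : (P - a - 1, l) ∈ D := (mem_iff_cl D hD _ _).mpr hc
      have hd := hdiag _ hmem
      simp only at hd
      have hqP : q * (P - a - 1) + q * (a + 1) = q * P := by
        rw [← Nat.mul_add]
        congr 1
        omega
      have hcomm : q * P = P * q := Nat.mul_comm _ _
      omega
    have hTle : T ≤ iot D Q (P - a - 1) := by
      unfold iot
      omega
    have hNT : NN D P Q T ≤ P - a - 1 := by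
      have := NN_iot (Q := Q) (P := P) hD (le_of_lt hx0)
      have hmono : NN D P Q T ≤ NN D P Q (iot D Q (P - a - 1)) := NN_mono hTle
      omega
    have hTm : T + m = P + Q := by omega
    simp only [hf, hTm, NN_top]
    omega
  have hcr := crossing f a T
  rw [if_pos hT, if_pos h0] at hcr
  omega
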